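/- Let G be an edge-maximal distance critical simple graph and let S be the set of vertices of G that belong to some determining pair (of some vertex). Then the complement set T = V(G) − S induces a clique in G; that is, any two distinct vertices of T are adjacent in G. -/

import Mathlib

/-- A graph is *distance critical* if for every vertex `v` there is a pair of vertices of
`G − v` whose distance in `G − v` differs from their distance in `G`
(distances are `ℕ∞`-valued, `⊤` when there is no connecting path). -/
def IsDistanceCritical {V : Type*} (G : SimpleGraph V) : Prop :=
  ∀ v : V, ∃ x y : ({v}ᶜ : Set V),
    (G.induce ({v}ᶜ : Set V)).edist x y ≠ G.edist (x : V) (y : V)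

/-- `{a, b}` is a *determining pair* for `v` : `a` and `b` are distinct, nonadjacent,
and `v` is their unique common neighbor. -/
def IsDeterminingPair {V : Type*} (G : SimpleGraph V) (v a b : V) : Prop :=
  a ≠ b ∧ ¬ G.Adj a b ∧ G.Adj a v ∧ G.Adj b v ∧
    ∀ w : V, G.Adj a w → G.Adj b w → w = v

/-- The graph obtained from `G` by adding the edge `xy`. -/
def addEdge {V : Type*} (G : SimpleGraph V) (x y : V) : SimpleGraph V :=
  G ⊔ SimpleGraph.edge x y

open SimpleGraph

lemma walk_to_induce {V : Type*} {G : SimpleGraph V} {s : Set V} :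
    ∀ {a b : V} (w : G.Walk a b) (hs : ∀ x ∈ w.support, x ∈ s),
    ∃ w' : (G.induce s).Walk ⟨a, hs a w.start_mem_support⟩ ⟨b, hs b w.end_mem_support⟩,
      w'.length = w.length
  | _, _, .nil, _ => ⟨.nil, rfl⟩
  | a, b, .cons h p, hs => by
    obtain ⟨w', hw'⟩ := walk_to_induce p
      (fun x hx => hs x (by simp [Walk.support_cons, hx]))
    exact ⟨.cons (by exact h) w', by exact congrArg (· + 1) hw'⟩

lemma edist_le_induce {V : Type*} (G : SimpleGraph V) (s : Set V) (a b : s) :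
    G.edist a b ≤ (G.induce s).edist a b := by
  rcases eq_or_ne ((G.induce s).edist a b) ⊤ with h | h
  · simp [h]
  · obtain ⟨w, hw⟩ := exists_walk_of_edist_ne_top h
    calc G.edist a b ≤ ((w.map (Embedding.induce s).toHom).length : ℕ∞) := edist_le _
    _ = (w.length : ℕ∞) := by rw [Walk.length_map]
    _ = (G.induce s).edist a b := hw

lemma exists_determining_pair {V : Type*} {G : SimpleGraph V} {v : V}
    (x y : ({v}ᶜ : Set V))
    (hdiff : (G.induce ({v}ᶜ : Set V)).edist x y ≠ G.edist (x : V) (y : V)) :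
    ∃ a b : V, IsDeterminingPair G v a b := by
  classical
  have hle := edist_le_induce G ({v}ᶜ : Set V) x y
  have hlt : G.edist (x : V) (y : V) < (G.induce ({v}ᶜ : Set V)).edist x y :=
    lt_of_le_of_ne hle (Ne.symm hdiff)
  have htop : G.edist (x : V) (y : V) ≠ ⊤ := fun h => by
    rw [h] at hlt; exact not_top_lt hlt
  obtain ⟨p, hp⟩ := exists_walk_of_edist_ne_top htop
  -- key : any walk from x to y avoiding v of length ≤ edist gives a contradiction
  have key : ∀ (w : G.Walk (x : V) (y : V)), v ∉ w.support →
      (w.length : ℕ∞) ≤ G.edist (x : V) (y : V) → False := by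
    intro w hw hlen
    have hs : ∀ z ∈ w.support, z ∈ ({v}ᶜ : Set V) := by
      intro z hz
      simp only [Set.mem_compl_iff, Set.mem_singleton_iff]
      rintro rfl; exact hw hz
    obtain ⟨w', hw'⟩ := walk_to_induce w hs
    have h1 : (G.induce ({v}ᶜ : Set V)).edist x y ≤ (w'.length : ℕ∞) := edist_le w'
    rw [hw'] at h1
    exact absurd (h1.trans hlen) (not_le.mpr hlt)
  set q := p.bypass with hqdef
  have hq : q.IsPath := p.bypass_isPath
  have hql : (q.length : ℕ∞) = G.edist (x : V) (y : V) := by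
    refine le_antisymm ?_ ?_
    · rw [← hp]; exact_mod_cast Nat.cast_le.mpr p.length_bypass_le
    · exact edist_le q
  have hvx : v ≠ (x : V) := by
    have := x.prop; simp only [Set.mem_compl_iff, Set.mem_singleton_iff] at this
    exact fun h => this h.symm
  have hvy : v ≠ (y : V) := by
    have := y.prop; simp only [Set.mem_compl_iff, Set.mem_singleton_iff] at this
    exact fun h => this h.symm
  have hv : v ∈ q.support := by
    by_contra hv
    exact key q hv hql.le
  set t := q.takeUntil v hv with htdef
  set d := q.dropUntil v hv with hddef
  have hspec : t.append d = q := q.take_spec hv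
  have ht : t.IsPath := hq.takeUntil hv
  have hd : d.IsPath := hq.dropUntil hv
  have hlen_td : t.length + d.length = q.length := by
    rw [← hspec, Walk.length_append]
  obtain ⟨a', hva', r0, hr0⟩ := Walk.exists_eq_cons_of_ne hvx t.reverse
  obtain ⟨b', hvb', r1, hr1⟩ := Walk.exists_eq_cons_of_ne hvy d
  have hvr0 : v ∉ r0.support := by
    have := ht.reverse
    rw [hr0] at this
    have := this.support_nodup
    simp only [Walk.support_cons, List.nodup_cons] at this
    exact this.1
  have hvr1 : v ∉ r1.support := by
    have := hd
    rw [hr1] at this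
    have := this.support_nodup
    simp only [Walk.support_cons, List.nodup_cons] at this
    exact this.1
  have hlr0 : r0.length + 1 = t.length := by
    have : t.reverse.length = r0.length + 1 := by rw [hr0]; simp
    rw [Walk.length_reverse] at this; omega
  have hlr1 : r1.length + 1 = d.length := by
    have : d.length = r1.length + 1 := by rw [hr1]; simp
    omega
  refine ⟨a', b', ?_, ?_, hva'.symm, hvb'.symm, ?_⟩
  · rintro rfl
    have hw : v ∉ (r0.reverse.append r1).support := by
      rw [Walk.mem_support_append_iff]
      push_neg
      exact ⟨by rwa [Walk.support_reverse, List.mem_reverse], hvr1⟩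
    refine key (r0.reverse.append r1) hw ?_
    rw [← hql]
    exact_mod_cast Nat.cast_le.mpr (by simp [Walk.length_append, Walk.length_reverse]; omega)
  · intro hab
    have hw : v ∉ (r0.reverse.append (Walk.cons hab r1)).support := by
      rw [Walk.mem_support_append_iff]
      push_neg
      refine ⟨by rwa [Walk.support_reverse, List.mem_reverse], ?_⟩
      simp only [Walk.support_cons, List.mem_cons]
      push_neg
      exact ⟨fun h => (G.ne_of_adj hva') h, hvr1⟩
    refine key (r0.reverse.append (Walk.cons hab r1)) hw ?_
    rw [← hql]
    exact_mod_cast Nat.cast_le.mpr (by simp [Walk.length_append, Walk.length_reverse]; omega)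
  · intro w hw1 hw2
    by_contra hne
    have hw : v ∉ (r0.reverse.append (Walk.cons hw1 (Walk.cons hw2.symm r1))).support := by
      rw [Walk.mem_support_append_iff]
      push_neg
      refine ⟨by rwa [Walk.support_reverse, List.mem_reverse], ?_⟩
      simp only [Walk.support_cons, List.mem_cons]
      push_neg
      exact ⟨fun h => (G.ne_of_adj hva') h, fun h => hne h.symm, hvr1⟩
    refine key (r0.reverse.append (Walk.cons hw1 (Walk.cons hw2.symm r1))) hw ?_
    rw [← hql]
    exact_mod_cast Nat.cast_le.mpr (by simp [Walk.length_append, Walk.length_reverse]; omega)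

lemma detPair_edist {V : Type*} {H : SimpleGraph V} {v a b : V}
    (h : IsDeterminingPair H v a b) :
    ∃ x y : ({v}ᶜ : Set V),
      (H.induce ({v}ᶜ : Set V)).edist x y ≠ H.edist (x : V) (y : V) := by
  obtain ⟨hab, hnadj, hav, hbv, huniq⟩ := h
  have hamem : a ∈ ({v}ᶜ : Set V) := by simp [hav.ne]
  have hbmem : b ∈ ({v}ᶜ : Set V) := by simp [hbv.ne]
  refine ⟨⟨a, hamem⟩, ⟨b, hbmem⟩, ?_⟩
  have h2 : H.edist a b = 2 := by
    have hle : H.edist a b ≤ 2 := by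
      simpa using edist_le (Walk.cons hav (Walk.cons hbv.symm Walk.nil))
    have hne0 : H.edist a b ≠ 0 := fun h => hab (edist_eq_zero_iff.mp h)
    have hne1 : H.edist a b ≠ 1 := fun h => hnadj (edist_eq_one_iff_adj.mp h)
    have htop : H.edist a b ≠ ⊤ := fun h => by rw [h] at hle; exact absurd hle (by simp)
    lift H.edist a b to ℕ using htop with n hn
    have h1 : n ≤ 2 := by exact_mod_cast hle
    have h2 : n ≠ 0 := by exact_mod_cast hne0
    have h3 : n ≠ 1 := by exact_mod_cast hne1
    have : n = 2 := by omega
    exact_mod_cast congrArg Nat.cast this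
  rw [h2]
  intro hcon
  have hcon' : (H.induce ({v}ᶜ : Set V)).edist ⟨a, hamem⟩ ⟨b, hbmem⟩ = ((2 : ℕ) : ℕ∞) := by
    exact_mod_cast hcon
  obtain ⟨p, hp⟩ := exists_walk_of_edist_eq_coe hcon'
  set c := p.getVert 1 with hc
  have h01 : (H.induce ({v}ᶜ : Set V)).Adj (p.getVert 0) c :=
    p.adj_getVert_succ (by omega)
  have h12 : (H.induce ({v}ᶜ : Set V)).Adj c (p.getVert 2) :=
    p.adj_getVert_succ (by omega)
  rw [p.getVert_zero] at h01
  have hend : p.getVert 2 = ⟨b, hbmem⟩ := by rw [← hp]; exact p.getVert_length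
  rw [hend] at h12
  have hAac : H.Adj a (c : V) := h01
  have hAbc : H.Adj b (c : V) := h12.symm
  have := huniq c hAac hAbc
  have := c.prop
  simp only [Set.mem_compl_iff, Set.mem_singleton_iff] at this
  exact this ‹(c : V) = v›

lemma detPair_symm {V : Type*} {G : SimpleGraph V} {v a b : V}
    (h : IsDeterminingPair G v a b) : IsDeterminingPair G v b a :=
  ⟨h.1.symm, fun hadj => h.2.1 hadj.symm, h.2.2.2.1, h.2.2.1,
    fun w h1 h2 => h.2.2.2.2 w h2 h1⟩

theorem stmt_18 {V : Type*} [Fintype V] (G : SimpleGraph V)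
    (hG : IsDistanceCritical G)
    (hmax : ∀ x y : V, x ≠ y → ¬ G.Adj x y → ¬ IsDistanceCritical (addEdge G x y)) :
    ∀ x y : V, x ∉ {u : V | ∃ v b : V, IsDeterminingPair G v u b} →
      y ∉ {u : V | ∃ v b : V, IsDeterminingPair G v u b} →
      x ≠ y → G.Adj x y := by
  intro x y hx hy hxy
  by_contra hadj
  refine hmax x y hxy hadj ?_
  intro v
  obtain ⟨x', y', hdiff⟩ := hG v
  obtain ⟨a, b, hpair⟩ := exists_determining_pair x' y' hdiff
  have hax : a ≠ x := fun h => hx ⟨v, b, h ▸ hpair⟩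
  have hay : a ≠ y := fun h => hy ⟨v, b, h ▸ hpair⟩
  have hbx : b ≠ x := fun h => hx ⟨v, a, h ▸ detPair_symm hpair⟩
  have hby : b ≠ y := fun h => hy ⟨v, a, h ▸ detPair_symm hpair⟩
  obtain ⟨h1, h2, h3, h4, h5⟩ := hpair
  have hnew : IsDeterminingPair (addEdge G x y) v a b := by
    refine ⟨h1, ?_, Or.inl h3, Or.inl h4, ?_⟩
    · rintro (h | h)
      · exact h2 h
      · rw [edge_adj] at h
        rcases h.1 with ⟨rfl, rfl⟩ | ⟨rfl, rfl⟩
        · exact hax rfl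
        · exact hay rfl
    · intro w hw1 hw2
      refine h5 w ?_ ?_
      · rcases hw1 with h | h
        · exact h
        · rw [edge_adj] at h
          rcases h.1 with ⟨rfl, _⟩ | ⟨rfl, _⟩
          · exact absurd rfl hax
          · exact absurd rfl hay
      · rcases hw2 with h | h
        · exact h
        · rw [edge_adj] at h
          rcases h.1 with ⟨rfl, _⟩ | ⟨rfl, _⟩
          · exact absurd rfl hbx
          · exact absurd rfl hby
  exact detPair_edist hnew
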